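/- (Irrational decomposition of a cone) Let K = v + ℝ_{≥0}w_1 + ⋯ + ℝ_{≥0}w_n ⊆ ℝ^d be a strictly convex rational polyhedral cone (v ∈ ℝ^d, w_i ∈ ℤ^d, and there exists ξ with ξ·w_i > 0 for all i), and let K_1, …, K_l be simple rational cones, each with apex v and generated by d of the vectors w_1, …, w_n, with pairwise disjoint interiors and K = K_1 ∪ ⋯ ∪ K_l. Then there exists s ∈ ℝ^d such that (s+K) ∩ ℤ^d = K ∩ ℤ^d, no integer point lies on the boundary of any s+K_i, and K ∩ ℤ^d is the disjoint union of the sets (s+K_1) ∩ ℤ^d, …, (s+K_l) ∩ ℤ^d. -/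

import Mathlib

open scoped BigOperators Classical

noncomputable section

/-- The real vector corresponding to an integer vector. -/
def toR (d : ℕ) (m : Fin d → ℤ) : Fin d → ℝ := fun i => (m i : ℝ)

/-- The standard dot product on `ℝ^d`. -/
def dotR (d : ℕ) (x y : Fin d → ℝ) : ℝ := ∑ i, x i * y i

/-- Laurent polynomials `ℂ[x₁^{±1},…,x_d^{±1}]`, represented by their coefficient functions. -/
abbrev LaurentPoly (d : ℕ) := (Fin d → ℤ) →₀ ℂ

/-- The integer-point generating series of a subset of `ℝ^d`: the function `ℤ^d → ℂ`
equal to `1` on `S ∩ ℤ^d` and `0` elsewhere. -/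
def genSeries (d : ℕ) (S : Set (Fin d → ℝ)) : (Fin d → ℤ) → ℂ :=
  fun m => if toR d m ∈ S then 1 else 0

/-- The action of a Laurent polynomial on a formal Laurent series,
`(x^w · S)(m) = S(m - w)` extended linearly. -/
def actLP (d : ℕ) (g : LaurentPoly d) (S : (Fin d → ℤ) → ℂ) : (Fin d → ℤ) → ℂ :=
  fun m => ∑ w ∈ g.support, g w * S (m - w)

/-- The series of a Laurent polynomial `f`, i.e. `Σ_m f_m x^m` as a formal series. -/
def seriesOf (d : ℕ) (f : LaurentPoly d) : (Fin d → ℤ) → ℂ := fun m => f m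

/-- The cone `v + ℝ_{≥0} w₁ + ⋯ + ℝ_{≥0} w_n`. -/
def coneSet (d n : ℕ) (v : Fin d → ℝ) (w : Fin n → Fin d → ℤ) : Set (Fin d → ℝ) :=
  {y | ∃ lam : Fin n → ℝ, (∀ i, 0 ≤ lam i) ∧ y = v + ∑ i, lam i • toR d (w i)}

/-- The fundamental half-open parallelepiped `{v + Σ λᵢ wᵢ : 0 ≤ λᵢ < 1}`. -/
def parSet (d : ℕ) (v : Fin d → ℝ) (w : Fin d → Fin d → ℤ) : Set (Fin d → ℝ) :=
  {y | ∃ lam : Fin d → ℝ, (∀ i, 0 ≤ lam i ∧ lam i < 1) ∧ y = v + ∑ i, lam i • toR d (w i)}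

/-- A simple rational cone: `v + ℝ_{≥0} w₁ + ⋯ + ℝ_{≥0} w_d` with `w₁,…,w_d ∈ ℤ^d`
linearly independent. -/
def IsSimpleCone (d : ℕ) (K : Set (Fin d → ℝ)) : Prop :=
  ∃ (v : Fin d → ℝ) (w : Fin d → Fin d → ℤ),
    LinearIndependent ℝ (fun i => toR d (w i)) ∧ K = coneSet d d v w

/-- Membership in the module `PL` of polyhedral Laurent series: a finite
`ℂ[x₁^{±1},…,x_d^{±1}]`-linear combination of the series of simple rational cones. -/
def MemPL (d : ℕ) (S : (Fin d → ℤ) → ℂ) : Prop :=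
  ∃ (n : ℕ) (g : Fin n → LaurentPoly d) (K : Fin n → Set (Fin d → ℝ)),
    (∀ i, IsSimpleCone d (K i)) ∧ S = ∑ i, actLP d (g i) (genSeries d (K i))

/-- The field of rational functions `ℂ(x₁,…,x_d)`. -/
abbrev RatF (d : ℕ) := FractionRing (MvPolynomial (Fin d) ℂ)

/-- The monomial `x^w`, `w ∈ ℤ^d`, as a rational function. -/
def ratMon (d : ℕ) (w : Fin d → ℤ) : RatF d :=
  ∏ i, (algebraMap (MvPolynomial (Fin d) ℂ) (RatF d) (MvPolynomial.X i)) ^ (w i)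

/-- A Laurent polynomial as a rational function. -/
def toRat (d : ℕ) (g : LaurentPoly d) : RatF d :=
  ∑ w ∈ g.support, algebraMap (MvPolynomial (Fin d) ℂ) (RatF d) (MvPolynomial.C (g w)) * ratMon d w

/-- `σ_S(x) = Σ_{m ∈ S ∩ ℤ^d} x^m`, as a rational function (for `S` with finitely many
integer points). -/
def sigmaSet (d : ℕ) (S : Set (Fin d → ℝ)) : RatF d :=
  ∑ᶠ m ∈ {m : Fin d → ℤ | toR d m ∈ S}, ratMon d m

/-- `φ : PL → ℂ(x₁,…,x_d)` is the `ℂ[x₁^{±1},…,x_d^{±1}]`-module homomorphism sending the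
series `S_K` of a simple rational cone `K` to `σ_{P_K}(x) / Π (1 - x^{wᵢ})`. -/
def IsPhi (d : ℕ) (φ : ((Fin d → ℤ) → ℂ) → RatF d) : Prop :=
  (∀ S T, MemPL d S → MemPL d T → φ (S + T) = φ S + φ T) ∧
  (∀ (g : LaurentPoly d) (S), MemPL d S → φ (actLP d g S) = toRat d g * φ S) ∧
  (∀ (v : Fin d → ℝ) (w : Fin d → Fin d → ℤ),
      LinearIndependent ℝ (fun i => toR d (w i)) →
      φ (genSeries d (coneSet d d v w)) =
        sigmaSet d (parSet d v w) / ∏ i, (1 - ratMon d (w i)))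

/-- A convex polyhedron: an intersection of finitely many closed halfspaces. -/
def IsPolyhedron (d : ℕ) (P : Set (Fin d → ℝ)) : Prop :=
  ∃ (n : ℕ) (a : Fin n → Fin d → ℝ) (b : Fin n → ℝ),
    P = {y | ∀ i, dotR d (a i) y ≤ b i}

/-- The polar `P^∨ = {x : ⟨x,y⟩ ≤ 1 for all y ∈ P}`. -/
def polar (d : ℕ) (P : Set (Fin d → ℝ)) : Set (Fin d → ℝ) :=
  {x | ∀ y ∈ P, dotR d x y ≤ 1}


open Matrix

/-- real matrix whose rows are the generators -/
def genMat (d : ℕ) (w : Fin d → Fin d → ℤ) : Matrix (Fin d) (Fin d) ℝ :=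
  Matrix.of fun i j => ((w i j : ℤ) : ℝ)

lemma sum_smul_eq_vecMul (d : ℕ) (w : Fin d → Fin d → ℤ) (lam : Fin d → ℝ) :
    (∑ i, lam i • toR d (w i)) = lam ᵥ* genMat d w := by
  funext j
  simp [Matrix.vecMul, dotProduct, genMat, toR, Finset.sum_apply]

lemma mem_cone_iff (d : ℕ) (p : Fin d → ℝ) (w : Fin d → Fin d → ℤ)
    (hu : IsUnit (genMat d w).det) (z : Fin d → ℝ) :
    z ∈ coneSet d d p w ↔ ∀ i, 0 ≤ ((z - p) ᵥ* (genMat d w)⁻¹) i := by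
  set A := genMat d w
  constructor
  · rintro ⟨lam, hlam, rfl⟩ i
    have h1 : (p + lam ᵥ* A) - p = lam ᵥ* A := by abel
    rw [sum_smul_eq_vecMul, h1, Matrix.vecMul_vecMul, Matrix.mul_nonsing_inv _ hu,
      Matrix.vecMul_one]
    exact hlam i
  · intro h
    refine ⟨(z - p) ᵥ* A⁻¹, h, ?_⟩
    rw [sum_smul_eq_vecMul, Matrix.vecMul_vecMul, Matrix.nonsing_inv_mul _ hu,
      Matrix.vecMul_one]
    abel

lemma coneSet_add_mem {d n : ℕ} (v z : Fin d → ℝ) (w : Fin n → Fin d → ℤ)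
    (hz : z ∈ coneSet d n v w) (g : Fin d → Fin n) (μ : Fin d → ℝ) (hμ : ∀ j, 0 ≤ μ j) :
    z + ∑ j, μ j • toR d (w (g j)) ∈ coneSet d n v w := by
  obtain ⟨lam, hlam, rfl⟩ := hz
  refine ⟨fun i => lam i + ∑ j ∈ Finset.univ.filter (fun j => g j = i), μ j, fun i =>
    add_nonneg (hlam i) (Finset.sum_nonneg fun j _ => hμ j), ?_⟩
  have key : ∑ i, (∑ j ∈ Finset.univ.filter (fun j => g j = i), μ j) • toR d (w i)
      = ∑ j, μ j • toR d (w (g j)) := by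
    rw [← Finset.sum_fiberwise_of_maps_to (fun j _ => Finset.mem_univ (g j))
      (fun j => μ j • toR d (w (g j)))]
    refine Finset.sum_congr rfl fun i _ => ?_
    rw [Finset.sum_smul]
    refine Finset.sum_congr rfl fun j hj => ?_
    rw [(Finset.mem_filter.mp hj).2]
  calc v + ∑ i, lam i • toR d (w i) + ∑ j, μ j • toR d (w (g j))
      = v + ∑ i, (lam i • toR d (w i) + (∑ j ∈ Finset.univ.filter (fun j => g j = i), μ j) • toR d (w i)) := by
        rw [Finset.sum_add_distrib, key]; abel
    _ = v + ∑ i, (lam i + ∑ j ∈ Finset.univ.filter (fun j => g j = i), μ j) • toR d (w i) := by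
        simp [add_smul]

lemma null_level {d : ℕ} (φ : (Fin d → ℝ) →ₗ[ℝ] ℝ) (hφ : φ ≠ 0) (r : ℝ) :
    MeasureTheory.volume {s : Fin d → ℝ | φ s = r} = 0 := by
  obtain ⟨x₀, hx₀⟩ : ∃ x, φ x ≠ 0 := by
    by_contra h
    push_neg at h
    exact hφ (LinearMap.ext fun x => h x)
  set s₀ : Fin d → ℝ := (r / φ x₀) • x₀ with hs₀
  have hφs₀ : φ s₀ = r := by
    rw [hs₀, φ.map_smul, smul_eq_mul, div_mul_cancel₀ _ hx₀]
  have hset : {s : Fin d → ℝ | φ s = r} = (fun x => (-s₀) + x) ⁻¹' (LinearMap.ker φ : Set _) := by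
    ext x
    simp only [Set.mem_setOf_eq, Set.mem_preimage, SetLike.mem_coe, LinearMap.mem_ker, map_add,
      map_neg, hφs₀]
    constructor
    · intro h; rw [h]; ring
    · intro h; linarith
  rw [hset, MeasureTheory.measure_preimage_add]
  refine MeasureTheory.Measure.addHaar_submodule _ _ ?_
  intro h
  exact hx₀ (by rw [← LinearMap.mem_ker, h]; trivial)

lemma gap_lemma (c : ℝ) (D : ℕ) (hD : 0 < D) (k : ℤ) (h : (k : ℝ) / D < c) :
    (k : ℝ) / D ≤ c - (c * D - ⌈c * (D : ℝ)⌉ + 1) / D := by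
  have hD' : (0 : ℝ) < D := by exact_mod_cast hD
  have h1 : (k : ℝ) < c * D := by
    rw [div_lt_iff₀ hD'] at h; linarith
  have h2 : k < ⌈c * (D : ℝ)⌉ := Int.lt_ceil.mpr h1
  have h3 : (k : ℝ) ≤ (⌈c * (D : ℝ)⌉ : ℝ) - 1 := by
    have h4 : k + 1 ≤ ⌈c * (D : ℝ)⌉ := Int.lt_iff_add_one_le.mp h2
    have h5 : ((k + 1 : ℤ) : ℝ) ≤ (⌈c * (D : ℝ)⌉ : ℝ) := by exact_mod_cast h4
    push_cast at h5; linarith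
  rw [div_le_iff₀ hD']
  have heq : (c - (c * D - ⌈c * (D : ℝ)⌉ + 1) / D) * D = (⌈c * (D : ℝ)⌉ : ℝ) - 1 := by
    field_simp; ring
  rw [heq]; exact h3

lemma gap_pos (c : ℝ) (D : ℕ) (hD : 0 < D) :
    0 < (c * D - ⌈c * (D : ℝ)⌉ + 1) / D := by
  have hD' : (0 : ℝ) < D := by exact_mod_cast hD
  have := Int.ceil_lt_add_one (c * (D : ℝ))
  apply div_pos _ hD'
  linarith

/-- The integer matrix of generators. -/
def genMatZ (d : ℕ) (w : Fin d → Fin d → ℤ) : Matrix (Fin d) (Fin d) ℤ :=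
  Matrix.of fun i j => w i j

lemma genMat_eq_map (d : ℕ) (w : Fin d → Fin d → ℤ) :
    genMat d w = (Int.castRingHom ℝ).mapMatrix (genMatZ d w) := rfl

lemma genMat_det (d : ℕ) (w : Fin d → Fin d → ℤ) :
    (genMat d w).det = ((genMatZ d w).det : ℝ) := by
  rw [genMat_eq_map, ← RingHom.map_det]; rfl

lemma vecMul_inv_rat (d : ℕ) (w : Fin d → Fin d → ℤ)
    (hu : IsUnit (genMat d w).det) (m : Fin d → ℤ) (i : Fin d) :
    ∃ k : ℤ, (toR d m ᵥ* (genMat d w)⁻¹) i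
      = (k : ℝ) / (((genMatZ d w).det.natAbs : ℕ) : ℝ) := by
  set Z := genMatZ d w
  have hdet : (genMat d w).det = (Z.det : ℝ) := genMat_det d w
  have hdne : (Z.det : ℝ) ≠ 0 := by
    rw [← hdet]; exact hu.ne_zero
  have hadj : (genMat d w).adjugate = (Int.castRingHom ℝ).mapMatrix Z.adjugate := by
    rw [genMat_eq_map, ← RingHom.map_adjugate]
  have hval : (toR d m ᵥ* (genMat d w)⁻¹) i
      = ((∑ j, m j * Z.adjugate j i : ℤ) : ℝ) / (Z.det : ℝ) := by
    rw [Matrix.inv_def, hadj, hdet]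
    simp only [Matrix.vecMul, dotProduct, Matrix.smul_apply, Ring.inverse_eq_inv,
      RingHom.mapMatrix_apply, Matrix.map_apply, smul_eq_mul]
    push_cast
    rw [Finset.sum_div]
    refine Finset.sum_congr rfl fun j _ => ?_
    simp only [toR]
    field_simp
    rfl
  rcases le_or_gt 0 Z.det with hle | hlt
  · refine ⟨∑ j, m j * Z.adjugate j i, ?_⟩
    rw [hval]
    congr 1
    rw [Nat.cast_natAbs, abs_of_nonneg hle]
  · refine ⟨-∑ j, m j * Z.adjugate j i, ?_⟩
    rw [hval]
    have : ((Z.det.natAbs : ℕ) : ℝ) = -(Z.det : ℝ) := by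
      rw [Nat.cast_natAbs, abs_of_neg hlt]; push_cast; ring
    rw [this]
    push_cast
    field_simp


lemma cont_vecMul (d : ℕ) (B : Matrix (Fin d) (Fin d) ℝ) (i : Fin d) :
    Continuous fun s : Fin d → ℝ => (s ᵥ* B) i := by
  simp only [Matrix.vecMul, dotProduct]
  exact continuous_finset_sum _ fun j _ => ((continuous_apply j).mul continuous_const)

/-- **Irrational decomposition of a cone.** Let
`K = v + ℝ_{≥0}w₁ + ⋯ + ℝ_{≥0}w_n` be a strictly convex rational cone, decomposed into
simple cones `K_t` (each with apex `v`, generated by `d` of the `wᵢ`) with pairwise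
disjoint interiors. Then there is `s ∈ ℝ^d` with `(s+K) ∩ ℤ^d = K ∩ ℤ^d`, no integer
point on the boundary of any `s+K_t`, and `K ∩ ℤ^d` the disjoint union of the
`(s+K_t) ∩ ℤ^d`. -/
theorem statement12 (d n l : ℕ) (v : Fin d → ℝ) (w : Fin n → Fin d → ℤ)
    (xi : Fin d → ℝ) (hxi : ∀ i, 0 < dotR d xi (toR d (w i)))
    (sel : Fin l → Fin d → Fin n)
    (hsimp : ∀ t, LinearIndependent ℝ (fun i => toR d (w (sel t i))))
    (hdisj : ∀ t t', t ≠ t' →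
      Disjoint (interior (coneSet d d v (fun i => w (sel t i))))
        (interior (coneSet d d v (fun i => w (sel t' i)))))
    (hcover : coneSet d n v w = ⋃ t, coneSet d d v (fun i => w (sel t i))) :
    ∃ s : Fin d → ℝ,
      (∀ m : Fin d → ℤ,
        toR d m ∈ (fun y => s + y) '' coneSet d n v w ↔ toR d m ∈ coneSet d n v w) ∧
      (∀ (t : Fin l) (m : Fin d → ℤ),
        toR d m ∉ frontier ((fun y => s + y) '' coneSet d d v (fun i => w (sel t i)))) ∧
      (∀ m : Fin d → ℤ, toR d m ∈ coneSet d n v w ↔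
        ∃! t : Fin l, toR d m ∈ (fun y => s + y) '' coneSet d d v (fun i => w (sel t i))) := by
  classical
  have hvK : v ∈ coneSet d n v w := ⟨fun _ => 0, fun _ => le_rfl, by simp⟩
  rcases Nat.eq_zero_or_pos l with hl | hl
  · subst hl
    rw [hcover] at hvK
    obtain ⟨t, -⟩ := Set.mem_iUnion.mp hvK
    exact t.elim0
  set t₀ : Fin l := ⟨0, hl⟩ with ht₀
  set A : Fin l → Matrix (Fin d) (Fin d) ℝ := fun t => genMat d (fun i => w (sel t i)) with hA
  have hAu : ∀ t, IsUnit (A t).det := fun t => by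
    rw [← Matrix.isUnit_iff_isUnit_det]
    exact Matrix.linearIndependent_rows_iff_isUnit.mp (hsimp t)
  set B : Fin l → Matrix (Fin d) (Fin d) ℝ := fun t => (A t)⁻¹ with hB
  set Dn : Fin l → ℕ := fun t => ((genMatZ d (fun i => w (sel t i))).det).natAbs with hDn
  have hDnpos : ∀ t, 0 < Dn t := by
    intro t
    have h1 : ((genMatZ d fun i => w (sel t i)).det : ℝ) ≠ 0 := by
      rw [← genMat_det]; exact (hAu t).ne_zero
    have h0 : (genMatZ d fun i => w (sel t i)).det ≠ 0 := by exact_mod_cast h1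
    exact Int.natAbs_pos.mpr h0
  set c : Fin l → Fin d → ℝ := fun t i => (v ᵥ* B t) i with hc
  set δ : Fin l → Fin d → ℝ :=
    fun t i => (c t i * Dn t - ⌈c t i * (Dn t : ℝ)⌉ + 1) / Dn t with hδ
  have hδpos : ∀ t i, 0 < δ t i := fun t i => gap_pos _ _ (hDnpos t)
  have hrat : ∀ t (m : Fin d → ℤ) i, ∃ k : ℤ, (toR d m ᵥ* B t) i = (k : ℝ) / (Dn t : ℝ) :=
    fun t m i => vecMul_inv_rat d (fun i => w (sel t i)) (hAu t) m i
  have hmem : ∀ t z, z ∈ coneSet d d v (fun i => w (sel t i)) ↔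
      ∀ i, 0 ≤ ((z - v) ᵥ* B t) i :=
    fun t z => mem_cone_iff d v (fun i => w (sel t i)) (hAu t) z
  have hcont : ∀ t i, Continuous fun z : Fin d → ℝ => ((z - v) ᵥ* B t) i := by
    intro t i
    exact (cont_vecMul d (B t) i).comp (continuous_id.sub continuous_const)
  -- choose s
  set Bad : Set (Fin d → ℝ) := ⋃ (t : Fin l) (i : Fin d) (k : ℤ),
    {s | (s ᵥ* B t) i = (k : ℝ) / (Dn t : ℝ) - c t i} with hBadDef
  have hrowone : ∀ t i, ((A t i) ᵥ* B t) i = 1 := by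
    intro t i
    have h1 : A t * B t = 1 := Matrix.mul_nonsing_inv _ (hAu t)
    have h2 : ((A t i) ᵥ* B t) i = (A t * B t) i i := by
      simp [Matrix.vecMul, dotProduct, Matrix.mul_apply]
    rw [h2, h1, Matrix.one_apply_eq]
  have hBadnull : MeasureTheory.volume Bad = 0 := by
    refine MeasureTheory.measure_iUnion_null fun t => ?_
    refine MeasureTheory.measure_iUnion_null fun i => ?_
    refine MeasureTheory.measure_iUnion_null fun k => ?_
    set φ : (Fin d → ℝ) →ₗ[ℝ] ℝ := (LinearMap.proj i).comp (Matrix.vecMulLinear (B t)) with hφdef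
    have hφeq : ∀ x, φ x = (x ᵥ* B t) i := fun x => rfl
    have hφ : φ ≠ 0 := by
      intro h0
      have h1 : φ (A t i) = 0 := by rw [h0]; rfl
      rw [hφeq, hrowone t i] at h1
      exact one_ne_zero h1
    have hset : {s : Fin d → ℝ | (s ᵥ* B t) i = (k : ℝ) / (Dn t : ℝ) - c t i}
        = {s | φ s = (k : ℝ) / (Dn t : ℝ) - c t i} := by
      ext x; simp [hφeq]
    rw [hset]
    exact null_level φ hφ _
  set U : Set (Fin d → ℝ) :=
    {s | ∀ j, 0 < (((-s) ᵥ* B t₀) j)} ∩ {s | ∀ t i, |(s ᵥ* B t) i| < δ t i} with hUdef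
  have hopen2 : IsOpen {s : Fin d → ℝ | ∀ t i, |(s ᵥ* B t) i| < δ t i} := by
    have : {s : Fin d → ℝ | ∀ t i, |(s ᵥ* B t) i| < δ t i}
        = ⋂ t, ⋂ i, (fun s : Fin d → ℝ => |(s ᵥ* B t) i|) ⁻¹' Set.Iio (δ t i) := by
      ext s; simp
    rw [this]
    exact isOpen_iInter_of_finite fun t => isOpen_iInter_of_finite fun i =>
      isOpen_Iio.preimage (cont_vecMul d (B t) i).abs
  have hUopen : IsOpen U := by
    refine IsOpen.inter ?_ hopen2
    have : {s : Fin d → ℝ | ∀ j, 0 < ((-s) ᵥ* B t₀) j}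
        = ⋂ j, (fun s : Fin d → ℝ => ((-s) ᵥ* B t₀) j) ⁻¹' Set.Ioi 0 := by
      ext s; simp
    rw [this]
    exact isOpen_iInter_of_finite fun j =>
      isOpen_Ioi.preimage ((cont_vecMul d (B t₀) j).comp continuous_neg)
  have hUne : U.Nonempty := by
    have h0mem : (0 : Fin d → ℝ) ∈ {s : Fin d → ℝ | ∀ t i, |(s ᵥ* B t) i| < δ t i} := by
      intro t i
      rw [Matrix.zero_vecMul]
      simpa using hδpos t i
    obtain ⟨ε₀, hε₀pos, hball⟩ := Metric.isOpen_iff.mp hopen2 0 h0mem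
    set u : Fin d → ℝ := (fun _ => (1:ℝ)) ᵥ* A t₀ with hu
    set ε : ℝ := ε₀ / (2 * (‖u‖ + 1)) with hε
    have hnorm1 : (0:ℝ) < ‖u‖ + 1 := by positivity
    have hεpos : 0 < ε := by positivity
    refine ⟨-(ε • u), ?_, ?_⟩
    · intro j
      have h1 : (-(-(ε • u))) ᵥ* B t₀ = ε • ((fun _ => (1:ℝ)) ᵥ* (A t₀ * B t₀)) := by
        rw [neg_neg, hu, Matrix.smul_vecMul, Matrix.vecMul_vecMul]
      rw [h1, Matrix.mul_nonsing_inv _ (hAu t₀), Matrix.vecMul_one]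
      simpa using hεpos
    · apply hball
      rw [Metric.mem_ball, dist_zero_right, norm_neg, norm_smul, Real.norm_eq_abs,
        abs_of_pos hεpos]
      have h2 : ε * ‖u‖ ≤ ε * (‖u‖ + 1) := by nlinarith [norm_nonneg u]
      have h3 : ε * (‖u‖ + 1) = ε₀ / 2 := by
        rw [hε]; field_simp
      linarith
  have hsex : ∃ s, s ∈ U ∧ s ∉ Bad := by
    by_contra hcon
    push_neg at hcon
    have hsub : U ⊆ Bad := fun s hs => hcon s hs
    have hle : MeasureTheory.volume U ≤ MeasureTheory.volume Bad :=
      MeasureTheory.measure_mono hsub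
    rw [hBadnull] at hle
    exact (hUopen.measure_pos MeasureTheory.volume hUne).ne' (le_antisymm hle zero_le)
  obtain ⟨s, ⟨hs1, hs2⟩, hsBad⟩ := hsex
  have hs3 : ∀ t i (k : ℤ), (s ᵥ* B t) i ≠ (k : ℝ) / (Dn t : ℝ) - c t i := by
    intro t i k h
    exact hsBad (Set.mem_iUnion.mpr ⟨t, Set.mem_iUnion.mpr ⟨i, Set.mem_iUnion.mpr ⟨k, h⟩⟩⟩)
  have hlin : ∀ t (x y : Fin d → ℝ) i, ((x + y) ᵥ* B t) i = (x ᵥ* B t) i + (y ᵥ* B t) i := by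
    intro t x y i
    rw [Matrix.add_vecMul]; simp
  have F0 : ∀ t (m : Fin d → ℤ) i, ((toR d m - (v + s)) ᵥ* B t) i ≠ 0 := by
    intro t m i h
    obtain ⟨k, hk⟩ := hrat t m i
    apply hs3 t i k
    have e : toR d m - (v + s) = toR d m + (-(v + s)) := by abel
    rw [e, hlin, Matrix.neg_vecMul] at h
    simp only [Pi.neg_apply] at h
    have e2 : ((v + s) ᵥ* B t) i = (v ᵥ* B t) i + (s ᵥ* B t) i := hlin t v s i
    rw [hk] at h
    have hcv : c t i = (v ᵥ* B t) i := rfl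
    rw [hcv]
    linarith
  -- interior and frontier facts
  have hint : ∀ t z, (∀ i, 0 < ((z - v) ᵥ* B t) i) →
      z ∈ interior (coneSet d d v (fun i => w (sel t i))) := by
    intro t z hz
    have hopen : IsOpen {y : Fin d → ℝ | ∀ i, 0 < ((y - v) ᵥ* B t) i} := by
      have : {y : Fin d → ℝ | ∀ i, 0 < ((y - v) ᵥ* B t) i}
          = ⋂ i, (fun y : Fin d → ℝ => ((y - v) ᵥ* B t) i) ⁻¹' Set.Ioi 0 := by
        ext y; simp
      rw [this]
      exact isOpen_iInter_of_finite fun i => isOpen_Ioi.preimage (hcont t i)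
    have hsub : {y : Fin d → ℝ | ∀ i, 0 < ((y - v) ᵥ* B t) i}
        ⊆ coneSet d d v (fun i => w (sel t i)) :=
      fun y hy => (hmem t y).mpr fun i => (hy i).le
    exact interior_maximal hsub hopen hz
  have hclosed : ∀ t, IsClosed (coneSet d d v (fun i => w (sel t i))) := by
    intro t
    have : coneSet d d v (fun i => w (sel t i))
        = ⋂ i, (fun z : Fin d → ℝ => ((z - v) ᵥ* B t) i) ⁻¹' Set.Ici 0 := by
      ext z; rw [hmem t z]; simp
    rw [this]
    exact isClosed_iInter fun i => isClosed_Ici.preimage (hcont t i)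
  have hfront : ∀ t z, z ∈ frontier (coneSet d d v (fun i => w (sel t i))) →
      ∃ i, ((z - v) ᵥ* B t) i = 0 := by
    intro t z hz
    rw [(hclosed t).frontier_eq] at hz
    obtain ⟨hzK, hznotint⟩ := hz
    by_contra hno
    push_neg at hno
    exact hznotint (hint t z fun i => lt_of_le_of_ne ((hmem t z).mp hzK i) (Ne.symm (hno i)))
  have himg : ∀ (S : Set (Fin d → ℝ)) (x : Fin d → ℝ),
      x ∈ (fun y => s + y) '' S ↔ x - s ∈ S := by
    intro S x
    constructor
    · rintro ⟨y, hy, rfl⟩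
      simpa [add_sub_cancel_left] using hy
    · intro h
      exact ⟨x - s, h, by funext j; simp⟩
  have hfrontimg : ∀ S : Set (Fin d → ℝ),
      frontier ((fun y => s + y) '' S) = (fun y => s + y) '' frontier S := by
    intro S
    have h1 : (fun y => s + y) '' S = (Homeomorph.addLeft s) '' S := rfl
    have h2 : (fun y => s + y) '' frontier S = (Homeomorph.addLeft s) '' frontier S := rfl
    rw [h1, h2, Homeomorph.image_frontier]
  -- shifting lattice points
  have hKbshift : ∀ z, z ∈ coneSet d n v w → z - s ∈ coneSet d n v w := by
    intro z hz
    have hμ : ∀ j, 0 ≤ ((-s) ᵥ* B t₀) j := fun j => (hs1 j).le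
    have hsum : ∑ j, ((-s) ᵥ* B t₀) j • toR d (w (sel t₀ j)) = -s := by
      rw [sum_smul_eq_vecMul d (fun i => w (sel t₀ i)) ((-s) ᵥ* B t₀)]
      have : genMat d (fun i => w (sel t₀ i)) = A t₀ := rfl
      rw [this, Matrix.vecMul_vecMul, Matrix.nonsing_inv_mul _ (hAu t₀), Matrix.vecMul_one]
    have := coneSet_add_mem v z w hz (sel t₀) ((-s) ᵥ* B t₀) hμ
    rw [hsum] at this
    have e : z + -s = z - s := by abel
    rwa [e] at this
  have hback : ∀ m : Fin d → ℤ, toR d m - s ∈ coneSet d n v w → toR d m ∈ coneSet d n v w := by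
    intro m hm
    rw [hcover] at hm ⊢
    obtain ⟨t, ht⟩ := Set.mem_iUnion.mp hm
    refine Set.mem_iUnion.mpr ⟨t, ?_⟩
    rw [hmem t] at ht ⊢
    intro i
    obtain ⟨k, hk⟩ := hrat t m i
    have h1 : 0 ≤ ((toR d m - s - v) ᵥ* B t) i := ht i
    have hrel : ((toR d m - v) ᵥ* B t) i = ((toR d m - s - v) ᵥ* B t) i + (s ᵥ* B t) i := by
      have e : toR d m - v = (toR d m - s - v) + s := by abel
      rw [e, hlin]
    have hval : ((toR d m - v) ᵥ* B t) i = (k : ℝ) / (Dn t : ℝ) - c t i := by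
      have e2 : toR d m - v = toR d m + (-v) := by abel
      have e3 : ((-v) ᵥ* B t) i = -(c t i) := by
        rw [Matrix.neg_vecMul]; simp only [Pi.neg_apply]; rfl
      rw [e2, hlin, hk, e3]
      ring
    by_contra hneg
    push_neg at hneg
    have hlt : (k : ℝ) / (Dn t : ℝ) < c t i := by rw [hval] at hneg; linarith
    have hgap := gap_lemma (c t i) (Dn t) (hDnpos t) k hlt
    have hδeq : δ t i = (c t i * Dn t - ⌈c t i * (Dn t : ℝ)⌉ + 1) / Dn t := rfl
    have habs := abs_lt.mp (hs2 t i)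
    rw [← hδeq] at hgap
    rw [hval] at hrel
    linarith
  -- condition 2
  have cond2 : ∀ (t : Fin l) (m : Fin d → ℤ),
      toR d m ∉ frontier ((fun y => s + y) '' coneSet d d v (fun i => w (sel t i))) := by
    intro t m hm
    rw [hfrontimg, himg] at hm
    obtain ⟨i, hi⟩ := hfront t _ hm
    apply F0 t m i
    have e : toR d m - s - v = toR d m - (v + s) := by abel
    rw [e] at hi
    exact hi
  -- condition 1
  have cond1 : ∀ m : Fin d → ℤ,
      toR d m ∈ (fun y => s + y) '' coneSet d n v w ↔ toR d m ∈ coneSet d n v w := by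
    intro m
    rw [himg]
    exact ⟨hback m, fun h => hKbshift _ h⟩
  -- condition 3
  have hKtsub : ∀ t, coneSet d d v (fun i => w (sel t i)) ⊆ coneSet d n v w := by
    intro t
    rw [hcover]
    exact Set.subset_iUnion (fun t => coneSet d d v (fun i => w (sel t i))) t
  have hip : ∀ τ (m : Fin d → ℤ), toR d m - s ∈ coneSet d d v (fun i => w (sel τ i)) →
      toR d m - s ∈ interior (coneSet d d v (fun i => w (sel τ i))) := by
    intro τ m hτ
    apply hint
    intro i
    have h0 := (hmem τ _).mp hτ i
    have hne0 : ((toR d m - s - v) ᵥ* B τ) i ≠ 0 := by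
      have e : toR d m - s - v = toR d m - (v + s) := by abel
      rw [e]
      exact F0 τ m i
    exact lt_of_le_of_ne h0 (Ne.symm hne0)
  have cond3 : ∀ m : Fin d → ℤ, toR d m ∈ coneSet d n v w ↔
      ∃! t : Fin l, toR d m ∈ (fun y => s + y) '' coneSet d d v (fun i => w (sel t i)) := by
    intro m
    constructor
    · intro hmK
      have h1 : toR d m - s ∈ coneSet d n v w := hKbshift _ hmK
      rw [hcover] at h1
      obtain ⟨t, ht⟩ := Set.mem_iUnion.mp h1
      refine ⟨t, (himg _ _).mpr ht, ?_⟩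
      intro t' ht'
      rw [himg] at ht'
      by_contra hne
      exact Set.disjoint_left.mp (hdisj t' t hne) (hip t' m ht') (hip t m ht)
    · rintro ⟨t, ht, -⟩
      rw [himg] at ht
      exact hback m (hKtsub t ht)
  exact ⟨s, cond1, cond2, cond3⟩


end
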